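/- Let f : ∂D → ℝ be 1-Lipschitz (take Λ₀ = ∂D) and generic in the sense that f₋(x) < f₊(x) for every x ∈ D. Then there exists g : D̄ → ℝ such that g = f on ∂D, |g(x) − g(y)| ≤ d(x,y) for all x, y ∈ D̄, and |g(x) − g(y)| < d(x,y) for all distinct x, y ∈ D. (The paper's proposition: every generic achronal topological circle of Ein₂ is the boundary of a spacelike surface in AdS; the content is the existence of a contracting extension of f strictly between f₋ and f₊.) -/

import Mathlib

open scoped RealInnerProductSpace

/-- The closed hemisphere `D̄ = {x ∈ S² : ⟪x,e⟫ ≥ 0}`. -/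
def closedHemi (e : EuclideanSpace ℝ (Fin 3)) : Set (EuclideanSpace ℝ (Fin 3)) :=
  {x | ‖x‖ = 1 ∧ 0 ≤ ⟪x, e⟫}

/-- The open hemisphere `D = {x ∈ S² : ⟪x,e⟫ > 0}`. -/
def openHemi (e : EuclideanSpace ℝ (Fin 3)) : Set (EuclideanSpace ℝ (Fin 3)) :=
  {x | ‖x‖ = 1 ∧ 0 < ⟪x, e⟫}

/-- The equatorial circle `∂D = {x ∈ S² : ⟪x,e⟫ = 0}`. -/
def equator (e : EuclideanSpace ℝ (Fin 3)) : Set (EuclideanSpace ℝ (Fin 3)) :=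
  {x | ‖x‖ = 1 ∧ ⟪x, e⟫ = 0}

/-- `f₋(x) = sup_{z ∈ Λ₀} (f z - d(x,z))`. -/
noncomputable def lowerEnv (Λ₀ : Set (EuclideanSpace ℝ (Fin 3)))
    (f : EuclideanSpace ℝ (Fin 3) → ℝ) (x : EuclideanSpace ℝ (Fin 3)) : ℝ :=
  sSup ((fun z => f z - Real.arccos ⟪x, z⟫) '' Λ₀)

/-- `f₊(x) = inf_{z ∈ Λ₀} (f z + d(x,z))`. -/
noncomputable def upperEnv (Λ₀ : Set (EuclideanSpace ℝ (Fin 3)))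
    (f : EuclideanSpace ℝ (Fin 3) → ℝ) (x : EuclideanSpace ℝ (Fin 3)) : ℝ :=
  sInf ((fun z => f z + Real.arccos ⟪x, z⟫) '' Λ₀)

namespace SpacelikeAux

noncomputable section

abbrev V3 : Type := EuclideanSpace ℝ (Fin 3)

def dd (x y : V3) : ℝ := Real.arccos ⟪x, y⟫

lemma arccos_anti {a b : ℝ} (h : a ≤ b) : Real.arccos b ≤ Real.arccos a := by
  simp only [Real.arccos]
  have := Real.monotone_arcsin h
  linarith

lemma dd_comm (x y : V3) : dd x y = dd y x := by rw [dd, dd, real_inner_comm]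

lemma dd_nonneg (x y : V3) : 0 ≤ dd x y := Real.arccos_nonneg _

lemma dd_le_pi (x y : V3) : dd x y ≤ Real.pi := Real.arccos_le_pi _

lemma inner_le_one {x y : V3} (hx : ‖x‖ = 1) (hy : ‖y‖ = 1) : ⟪x, y⟫ ≤ 1 := by
  have h := abs_real_inner_le_norm x y
  rw [hx, hy] at h
  have := abs_le.mp h
  linarith [this.2]

lemma neg_one_le_inner {x y : V3} (hx : ‖x‖ = 1) (hy : ‖y‖ = 1) : -1 ≤ ⟪x, y⟫ := by
  have h := abs_real_inner_le_norm x y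
  rw [hx, hy] at h
  have := abs_le.mp h
  linarith [this.1]

lemma inner_self_one {x : V3} (hx : ‖x‖ = 1) : ⟪x, x⟫ = 1 := by
  rw [real_inner_self_eq_norm_sq, hx]; norm_num

lemma dd_self {x : V3} (hx : ‖x‖ = 1) : dd x x = 0 := by
  rw [dd, inner_self_one hx, Real.arccos_one]

lemma dd_pos {x y : V3} (hx : ‖x‖ = 1) (hy : ‖y‖ = 1) (hne : x ≠ y) : 0 < dd x y := by
  rw [dd, Real.arccos_pos]
  rcases lt_or_eq_of_le (inner_le_one hx hy) with h | h
  · exact h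
  · exfalso
    apply hne
    have h2 : ‖x - y‖ ^ 2 = 0 := by rw [norm_sub_sq_real, hx, hy, h]; ring
    have h3 : ‖x - y‖ = 0 := by
      have := sq_eq_zero_iff.mp h2
      exact this
    exact sub_eq_zero.mp (norm_eq_zero.mp h3)

lemma key_inner {x y z : V3} (hx : ‖x‖ = 1) (hy : ‖y‖ = 1) (hz : ‖z‖ = 1) :
    ⟪x, y⟫ * ⟪y, z⟫ - Real.sqrt (1 - ⟪x, y⟫ ^ 2) * Real.sqrt (1 - ⟪y, z⟫ ^ 2) ≤ ⟪x, z⟫ := by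
  set p := ⟪x, y⟫ with hp
  set q := ⟪y, z⟫ with hq
  set u := x - p • y with hu
  set v := z - q • y with hv
  have hyy : ⟪y, y⟫ = 1 := inner_self_one hy
  have hxx : ⟪x, x⟫ = 1 := inner_self_one hx
  have hzz : ⟪z, z⟫ = 1 := inner_self_one hz
  have hyx : (⟪y, x⟫ : ℝ) = p := by rw [hp, real_inner_comm]
  have hzy : (⟪z, y⟫ : ℝ) = q := by rw [hq, real_inner_comm]
  have huv : ⟪u, v⟫ = ⟪x, z⟫ - p * q := by
    rw [hu, hv]
    rw [inner_sub_left, inner_sub_right, inner_sub_right, real_inner_smul_left,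
      real_inner_smul_left, real_inner_smul_right, real_inner_smul_right, hyy]
    simp only [← hp, ← hq, hyx, hzy]
    ring
  have hu2 : ‖u‖ ^ 2 = 1 - p ^ 2 := by
    rw [← real_inner_self_eq_norm_sq, hu]
    rw [inner_sub_left, inner_sub_right, inner_sub_right, real_inner_smul_left,
      real_inner_smul_left, real_inner_smul_right, real_inner_smul_right, hyy, hxx]
    simp only [← hp, ← hq, hyx, hzy]
    ring
  have hv2 : ‖v‖ ^ 2 = 1 - q ^ 2 := by
    rw [← real_inner_self_eq_norm_sq, hv]
    rw [inner_sub_left, inner_sub_right, inner_sub_right, real_inner_smul_left,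
      real_inner_smul_left, real_inner_smul_right, real_inner_smul_right, hyy, hzz]
    simp only [← hp, ← hq, hyx, hzy]
    ring
  have hun : ‖u‖ = Real.sqrt (1 - p ^ 2) := by
    rw [← hu2, Real.sqrt_sq (norm_nonneg u)]
  have hvn : ‖v‖ = Real.sqrt (1 - q ^ 2) := by
    rw [← hv2, Real.sqrt_sq (norm_nonneg v)]
  have habs := abs_real_inner_le_norm u v
  rw [hun, hvn, huv] at habs
  have := abs_le.mp habs
  linarith [this.1]

lemma dd_triangle {x y z : V3} (hx : ‖x‖ = 1) (hy : ‖y‖ = 1) (hz : ‖z‖ = 1) :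
    dd x z ≤ dd x y + dd y z := by
  by_cases hπ : Real.pi ≤ dd x y + dd y z
  · exact le_trans (dd_le_pi x z) hπ
  push_neg at hπ
  have h0 : 0 ≤ dd x y + dd y z := add_nonneg (dd_nonneg _ _) (dd_nonneg _ _)
  have hcos : Real.cos (dd x y + dd y z) ≤ ⟪x, z⟫ := by
    rw [dd, dd, Real.cos_add, Real.cos_arccos (neg_one_le_inner hx hy) (inner_le_one hx hy),
      Real.cos_arccos (neg_one_le_inner hy hz) (inner_le_one hy hz),
      Real.sin_arccos, Real.sin_arccos]
    exact key_inner hx hy hz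
  calc dd x z ≤ Real.arccos (Real.cos (dd x y + dd y z)) := arccos_anti hcos
    _ = dd x y + dd y z := Real.arccos_cos h0 (le_of_lt hπ)

lemma equator_nonempty {e : V3} (he : ‖e‖ = 1) : (equator e).Nonempty := by
  have hene : e ≠ 0 := by
    intro h; rw [h] at he; simp at he
  have hne_top : (ℝ ∙ e) ≠ (⊤ : Submodule ℝ V3) := by
    intro h
    have h1 : Module.finrank ℝ (ℝ ∙ e) = 1 := finrank_span_singleton hene
    rw [h] at h1
    rw [finrank_top] at h1
    rw [finrank_euclideanSpace_fin] at h1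
    norm_num at h1
  have hbot : ((ℝ ∙ e)ᗮ : Submodule ℝ V3) ≠ ⊥ := by
    exact fun h => hne_top (Submodule.orthogonal_eq_bot_iff.mp h)
  obtain ⟨v, hv, hv0⟩ := Submodule.exists_mem_ne_zero_of_ne_bot hbot
  refine ⟨(‖v‖⁻¹ : ℝ) • v, ?_, ?_⟩
  · have : ‖(‖v‖⁻¹ : ℝ) • v‖ = ‖v‖⁻¹ * ‖v‖ := by
      rw [norm_smul, Real.norm_eq_abs, abs_inv, abs_norm]
    rw [this, inv_mul_cancel₀ (norm_ne_zero_iff.mpr hv0)]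
  · have hve : ⟪e, v⟫ = 0 := (Submodule.mem_orthogonal _ v).mp hv e
      (Submodule.mem_span_singleton_self e)
    rw [real_inner_smul_left, real_inner_comm, hve, mul_zero]

section Env

variable {e z₀ : V3} {f : V3 → ℝ}

lemma dd_def (x y : V3) : Real.arccos ⟪x, y⟫ = dd x y := rfl

lemma f_bound (hz₀ : z₀ ∈ equator e)
    (hLip : ∀ x ∈ equator e, ∀ y ∈ equator e, |f x - f y| ≤ Real.arccos ⟪x, y⟫)
    {z : V3} (hz : z ∈ equator e) : f z₀ - Real.pi ≤ f z ∧ f z ≤ f z₀ + Real.pi := by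
  have h := abs_le.mp (hLip z hz z₀ hz₀)
  have h3 : Real.arccos ⟪z, z₀⟫ ≤ Real.pi := Real.arccos_le_pi _
  constructor <;> linarith [h.1, h.2]

lemma lowerEnv_ne (hz₀ : z₀ ∈ equator e) (x : V3) :
    ((fun z => f z - Real.arccos ⟪x, z⟫) '' equator e).Nonempty :=
  ⟨_, ⟨z₀, hz₀, rfl⟩⟩

lemma lowerEnv_bdd (hz₀ : z₀ ∈ equator e)
    (hLip : ∀ x ∈ equator e, ∀ y ∈ equator e, |f x - f y| ≤ Real.arccos ⟪x, y⟫)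
    (x : V3) : BddAbove ((fun z => f z - Real.arccos ⟪x, z⟫) '' equator e) := by
  refine ⟨f z₀ + Real.pi, ?_⟩
  rintro _ ⟨z, hz, rfl⟩
  have h1 := (f_bound hz₀ hLip hz).2
  have h2 : 0 ≤ Real.arccos ⟪x, z⟫ := Real.arccos_nonneg _
  dsimp only
  linarith

lemma lowerEnv_ub (hz₀ : z₀ ∈ equator e)
    (hLip : ∀ x ∈ equator e, ∀ y ∈ equator e, |f x - f y| ≤ Real.arccos ⟪x, y⟫)
    (x : V3) : lowerEnv (equator e) f x ≤ f z₀ + Real.pi := by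
  refine csSup_le (lowerEnv_ne hz₀ x) ?_
  rintro _ ⟨z, hz, rfl⟩
  have h1 := (f_bound hz₀ hLip hz).2
  have h2 : 0 ≤ Real.arccos ⟪x, z⟫ := Real.arccos_nonneg _
  dsimp only
  linarith

lemma lowerEnv_lb (hz₀ : z₀ ∈ equator e)
    (hLip : ∀ x ∈ equator e, ∀ y ∈ equator e, |f x - f y| ≤ Real.arccos ⟪x, y⟫)
    (x : V3) : f z₀ - Real.pi ≤ lowerEnv (equator e) f x := by
  have h1 : f z₀ - Real.arccos ⟪x, z₀⟫ ≤ lowerEnv (equator e) f x :=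
    le_csSup (lowerEnv_bdd hz₀ hLip x) ⟨z₀, hz₀, rfl⟩
  have h2 : Real.arccos ⟪x, z₀⟫ ≤ Real.pi := Real.arccos_le_pi _
  linarith

lemma lowerEnv_lip (hz₀ : z₀ ∈ equator e)
    (hLip : ∀ x ∈ equator e, ∀ y ∈ equator e, |f x - f y| ≤ Real.arccos ⟪x, y⟫)
    {x y : V3} (hx : ‖x‖ = 1) (hy : ‖y‖ = 1) :
    lowerEnv (equator e) f x ≤ lowerEnv (equator e) f y + Real.arccos ⟪x, y⟫ := by
  refine csSup_le (lowerEnv_ne hz₀ x) ?_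
  rintro _ ⟨z, hz, rfl⟩
  have tri : dd y z ≤ dd y x + dd x z := dd_triangle hy hx hz.1
  have h1 : f z - Real.arccos ⟪y, z⟫ ≤ lowerEnv (equator e) f y :=
    le_csSup (lowerEnv_bdd hz₀ hLip y) ⟨z, hz, rfl⟩
  have hcomm : dd y x = dd x y := dd_comm y x
  dsimp only
  rw [dd_def x z, dd_def x y]
  rw [dd_def y z] at h1
  linarith

lemma lowerEnv_eq_self (hz₀ : z₀ ∈ equator e)
    (hLip : ∀ x ∈ equator e, ∀ y ∈ equator e, |f x - f y| ≤ Real.arccos ⟪x, y⟫)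
    {x : V3} (hx : x ∈ equator e) : lowerEnv (equator e) f x = f x := by
  refine le_antisymm ?_ ?_
  · refine csSup_le (lowerEnv_ne hz₀ x) ?_
    rintro _ ⟨z, hz, rfl⟩
    have h := (abs_le.mp (hLip z hz x hx)).2
    have hcomm : dd z x = dd x z := dd_comm z x
    rw [dd_def z x] at h
    dsimp only
    rw [dd_def x z]
    linarith
  · have : f x - Real.arccos ⟪x, x⟫ ≤ lowerEnv (equator e) f x :=
      le_csSup (lowerEnv_bdd hz₀ hLip x) ⟨x, hx, rfl⟩
    rw [dd_def x x, dd_self hx.1] at this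
    linarith

lemma upperEnv_ne (hz₀ : z₀ ∈ equator e) (x : V3) :
    ((fun z => f z + Real.arccos ⟪x, z⟫) '' equator e).Nonempty :=
  ⟨_, ⟨z₀, hz₀, rfl⟩⟩

lemma upperEnv_bdd (hz₀ : z₀ ∈ equator e)
    (hLip : ∀ x ∈ equator e, ∀ y ∈ equator e, |f x - f y| ≤ Real.arccos ⟪x, y⟫)
    (x : V3) : BddBelow ((fun z => f z + Real.arccos ⟪x, z⟫) '' equator e) := by
  refine ⟨f z₀ - Real.pi, ?_⟩
  rintro _ ⟨z, hz, rfl⟩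
  have h1 := (f_bound hz₀ hLip hz).1
  have h2 : 0 ≤ Real.arccos ⟪x, z⟫ := Real.arccos_nonneg _
  dsimp only
  linarith

lemma upperEnv_lb (hz₀ : z₀ ∈ equator e)
    (hLip : ∀ x ∈ equator e, ∀ y ∈ equator e, |f x - f y| ≤ Real.arccos ⟪x, y⟫)
    (x : V3) : f z₀ - Real.pi ≤ upperEnv (equator e) f x := by
  refine le_csInf (upperEnv_ne hz₀ x) ?_
  rintro _ ⟨z, hz, rfl⟩
  have h1 := (f_bound hz₀ hLip hz).1
  have h2 : 0 ≤ Real.arccos ⟪x, z⟫ := Real.arccos_nonneg _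
  dsimp only
  linarith

lemma upperEnv_ub (hz₀ : z₀ ∈ equator e)
    (hLip : ∀ x ∈ equator e, ∀ y ∈ equator e, |f x - f y| ≤ Real.arccos ⟪x, y⟫)
    (x : V3) : upperEnv (equator e) f x ≤ f z₀ + Real.pi := by
  have h1 : upperEnv (equator e) f x ≤ f z₀ + Real.arccos ⟪x, z₀⟫ :=
    csInf_le (upperEnv_bdd hz₀ hLip x) ⟨z₀, hz₀, rfl⟩
  have h2 : Real.arccos ⟪x, z₀⟫ ≤ Real.pi := Real.arccos_le_pi _
  linarith

lemma upperEnv_lip (hz₀ : z₀ ∈ equator e)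
    (hLip : ∀ x ∈ equator e, ∀ y ∈ equator e, |f x - f y| ≤ Real.arccos ⟪x, y⟫)
    {x y : V3} (hx : ‖x‖ = 1) (hy : ‖y‖ = 1) :
    upperEnv (equator e) f x ≤ upperEnv (equator e) f y + Real.arccos ⟪x, y⟫ := by
  have key : upperEnv (equator e) f x - Real.arccos ⟪x, y⟫ ≤ upperEnv (equator e) f y := by
    refine le_csInf (upperEnv_ne hz₀ y) ?_
    rintro _ ⟨z, hz, rfl⟩
    have tri : dd x z ≤ dd x y + dd y z := dd_triangle hx hy hz.1
    have h1 : upperEnv (equator e) f x ≤ f z + Real.arccos ⟪x, z⟫ :=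
      csInf_le (upperEnv_bdd hz₀ hLip x) ⟨z, hz, rfl⟩
    rw [dd_def x z] at h1
    dsimp only
    rw [dd_def y z]
    rw [dd_def x y]
    linarith
  linarith

lemma upperEnv_eq_self (hz₀ : z₀ ∈ equator e)
    (hLip : ∀ x ∈ equator e, ∀ y ∈ equator e, |f x - f y| ≤ Real.arccos ⟪x, y⟫)
    {x : V3} (hx : x ∈ equator e) : upperEnv (equator e) f x = f x := by
  refine le_antisymm ?_ ?_
  · have : upperEnv (equator e) f x ≤ f x + Real.arccos ⟪x, x⟫ :=
      csInf_le (upperEnv_bdd hz₀ hLip x) ⟨x, hx, rfl⟩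
    rw [dd_def x x, dd_self hx.1] at this
    linarith
  · refine le_csInf (upperEnv_ne hz₀ x) ?_
    rintro _ ⟨z, hz, rfl⟩
    have h := (abs_le.mp (hLip x hx z hz)).2
    dsimp only
    linarith

lemma hemi_split {x : V3} (hx : x ∈ closedHemi e) : x ∈ openHemi e ∨ x ∈ equator e := by
  rcases lt_or_eq_of_le hx.2 with h | h
  · exact Or.inl ⟨hx.1, h⟩
  · exact Or.inr ⟨hx.1, h.symm⟩

lemma openHemi_subset {x : V3} (hx : x ∈ openHemi e) : x ∈ closedHemi e :=
  ⟨hx.1, le_of_lt hx.2⟩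

lemma equator_subset {x : V3} (hx : x ∈ equator e) : x ∈ closedHemi e :=
  ⟨hx.1, le_of_eq hx.2.symm⟩

lemma env_le (hz₀ : z₀ ∈ equator e)
    (hLip : ∀ x ∈ equator e, ∀ y ∈ equator e, |f x - f y| ≤ Real.arccos ⟪x, y⟫)
    (hgen : ∀ x ∈ openHemi e, lowerEnv (equator e) f x < upperEnv (equator e) f x)
    {x : V3} (hx : x ∈ closedHemi e) :
    lowerEnv (equator e) f x ≤ upperEnv (equator e) f x := by
  rcases hemi_split hx with h | h
  · exact le_of_lt (hgen x h)
  · rw [lowerEnv_eq_self hz₀ hLip h, upperEnv_eq_self hz₀ hLip h]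

end Env

section EFun

variable {e : V3}

/-- squared Lorentzian-distance-to-graph functional -/
def EE (e : V3) (φ : V3 → ℝ) (x : V3) (t : ℝ) : ℝ :=
  sSup ((fun y => (max (t - φ y) 0) ^ 2 - (dd x y) ^ 2) '' closedHemi e)

lemma e_mem_closedHemi (he : ‖e‖ = 1) : e ∈ closedHemi e :=
  ⟨he, by rw [inner_self_one he]; norm_num⟩

lemma EE_ne (he : ‖e‖ = 1) (φ : V3 → ℝ) (x : V3) (t : ℝ) :
    ((fun y => (max (t - φ y) 0) ^ 2 - (dd x y) ^ 2) '' closedHemi e).Nonempty :=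
  ⟨_, ⟨e, e_mem_closedHemi he, rfl⟩⟩

lemma EE_bdd {φ : V3 → ℝ} {L : ℝ} (hL : ∀ y ∈ closedHemi e, L ≤ φ y) (x : V3) (t : ℝ) :
    BddAbove ((fun y => (max (t - φ y) 0) ^ 2 - (dd x y) ^ 2) '' closedHemi e) := by
  refine ⟨(max (t - L) 0) ^ 2, ?_⟩
  rintro _ ⟨y, hy, rfl⟩
  have h1 : max (t - φ y) 0 ≤ max (t - L) 0 :=
    max_le_max (sub_le_sub_left (hL y hy) t) le_rfl
  have h2 : (0:ℝ) ≤ max (t - φ y) 0 := le_max_right _ _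
  have h3 : (dd x y) ^ 2 ≥ 0 := sq_nonneg _
  dsimp only
  nlinarith

lemma EE_ge {φ : V3 → ℝ} {L : ℝ} (hL : ∀ y ∈ closedHemi e, L ≤ φ y) {x : V3}
    (hx : x ∈ closedHemi e) (t : ℝ) : (max (t - φ x) 0) ^ 2 ≤ EE e φ x t := by
  refine le_csSup (EE_bdd hL x t) ⟨x, hx, ?_⟩
  dsimp only
  rw [dd_self hx.1]
  ring

lemma EE_nonneg {φ : V3 → ℝ} {L : ℝ} (hL : ∀ y ∈ closedHemi e, L ≤ φ y) {x : V3}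
    (hx : x ∈ closedHemi e) (t : ℝ) : 0 ≤ EE e φ x t :=
  le_trans (sq_nonneg _) (EE_ge hL hx t)

lemma EE_nonpos (he : ‖e‖ = 1) {φ : V3 → ℝ} {x : V3} {t : ℝ}
    (h : ∀ y ∈ closedHemi e, t - φ y ≤ dd x y) : EE e φ x t ≤ 0 := by
  refine csSup_le (EE_ne he φ x t) ?_
  rintro _ ⟨y, hy, rfl⟩
  have h1 : max (t - φ y) 0 ≤ dd x y := max_le (h y hy) (dd_nonneg x y)
  have h2 : (0:ℝ) ≤ max (t - φ y) 0 := le_max_right _ _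
  dsimp only
  nlinarith

lemma EE_mono (he : ‖e‖ = 1) {φ : V3 → ℝ} {L : ℝ} (hL : ∀ y ∈ closedHemi e, L ≤ φ y)
    (x : V3) {t t' : ℝ} (h : t ≤ t') : EE e φ x t ≤ EE e φ x t' := by
  refine csSup_le (EE_ne he φ x t) ?_
  rintro _ ⟨y, hy, rfl⟩
  have h1 : max (t - φ y) 0 ≤ max (t' - φ y) 0 :=
    max_le_max (sub_le_sub_right h _) le_rfl
  have h2 : (0:ℝ) ≤ max (t - φ y) 0 := le_max_right _ _
  have h3 : (max (t' - φ y) 0) ^ 2 - (dd x y) ^ 2 ≤ EE e φ x t' :=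
    le_csSup (EE_bdd hL x t') ⟨y, hy, rfl⟩
  dsimp only
  nlinarith

lemma EE_modulus (he : ‖e‖ = 1) {φ : V3 → ℝ} {L : ℝ} (hL : ∀ y ∈ closedHemi e, L ≤ φ y)
    (x : V3) {t h M : ℝ} (hh : 0 ≤ h) (hM0 : 0 ≤ M)
    (hM : ∀ y ∈ closedHemi e, t + h - φ y ≤ M) :
    EE e φ x (t + h) ≤ EE e φ x t + h * (2 * M + h) := by
  refine csSup_le (EE_ne he φ x (t + h)) ?_
  rintro _ ⟨y, hy, rfl⟩
  have h1 : max (t + h - φ y) 0 ≤ max (t - φ y) 0 + h := by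
    refine max_le (by linarith [le_max_left (t - φ y) 0]) (by positivity)
  have h2 : max (t + h - φ y) 0 ≤ M := max_le (hM y hy) hM0
  have h3 : max (t - φ y) 0 ≤ max (t + h - φ y) 0 :=
    max_le_max (by linarith) le_rfl
  have h4 : (0:ℝ) ≤ max (t - φ y) 0 := le_max_right _ _
  have h5 : (max (t - φ y) 0) ^ 2 - (dd x y) ^ 2 ≤ EE e φ x t :=
    le_csSup (EE_bdd hL x t) ⟨y, hy, rfl⟩
  dsimp only
  nlinarith

set_option maxHeartbeats 1000000 in
lemma EE_key (he : ‖e‖ = 1) {φ : V3 → ℝ} {L : ℝ} (hL : ∀ y ∈ closedHemi e, L ≤ φ y)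
    {x y : V3} (hx : x ∈ closedHemi e) (hy : y ∈ closedHemi e) {tx ty K : ℝ}
    (hδ : 0 < dd x y) (hc : dd x y ≤ tx - ty) (hβ : 0 < EE e φ y ty)
    (hK : 0 < K) (hKb : ∀ y' ∈ closedHemi e, ty - φ y' + dd y y' ≤ K) :
    EE e φ y ty * (1 + 2 * dd x y / K) ≤ EE e φ x tx := by
  set β := EE e φ y ty with hβdef
  set δ := dd x y with hδdef
  set κ := 1 + 2 * δ / K with hκdef
  have hκ1 : 1 < κ := by
    have : 0 < 2 * δ / K := div_pos (by linarith) hK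
    rw [hκdef]; linarith
  have main : ∀ ε : ℝ, 0 < ε → ε < β → (β - ε) * κ ≤ EE e φ x tx := by
    intro ε hε1 hε2
    obtain ⟨a, ⟨y', hy', rfl⟩, ha⟩ :=
      exists_lt_of_lt_csSup (EE_ne he φ y ty) (show β - ε < β by linarith)
    dsimp only at ha
    set m := max (ty - φ y') 0 with hmdef
    set b := dd y y' with hbdef
    have hbnn : 0 ≤ b := dd_nonneg _ _
    have hmnn : 0 ≤ m := le_max_right _ _
    have hba : b < m := by nlinarith
    have hm0 : 0 < m := lt_of_le_of_lt hbnn hba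
    have hmeq : m = ty - φ y' := by
      rcases le_or_gt (ty - φ y') 0 with h | h
      · rw [hmdef, max_eq_right h] at hm0; exact absurd hm0 (lt_irrefl 0)
      · rw [hmdef, max_eq_left (le_of_lt h)]
    have hΔK : (ty - φ y') + b ≤ K := hKb y' hy'
    have htri : dd x y' ≤ δ + b := by
      rw [hδdef, hbdef]
      exact dd_triangle hx.1 hy.1 hy'.1
    have hddnn : 0 ≤ dd x y' := dd_nonneg _ _
    have hΔpos0 : 0 < ty - φ y' := hmeq ▸ hm0
    have hmx : max (tx - φ y') 0 = (ty - φ y') + (tx - ty) := by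
      have h1 : (0:ℝ) ≤ tx - φ y' := by linarith
      rw [max_eq_left h1]; ring
    have hΔmb : (β - ε) / K < (ty - φ y') - b := by
      rw [div_lt_iff₀ hK]
      have haa : β - ε < (ty - φ y') ^ 2 - b ^ 2 := by rw [← hmeq]; exact ha
      nlinarith
    have helem2 : (max (tx - φ y') 0) ^ 2 - (dd x y') ^ 2 ≤ EE e φ x tx :=
      le_csSup (EE_bdd hL x tx) ⟨y', hy', rfl⟩
    have haa : β - ε < (ty - φ y') ^ 2 - b ^ 2 := by rw [← hmeq]; exact ha
    have helem : (β - ε) + 2 * δ * ((β - ε) / K) ≤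
        (max (tx - φ y') 0) ^ 2 - (dd x y') ^ 2 := by
      rw [hmx]
      have h1 : (dd x y') ^ 2 ≤ (δ + b) ^ 2 := by nlinarith
      have hΔpos : 0 < ty - φ y' := by rw [← hmeq]; exact hm0
      have hc2 : δ ≤ tx - ty := hc
      have hδ2 : 0 < δ := hδ
      have hKK : 0 < K := hK
      have hq : 0 ≤ (β - ε) / K := div_nonneg (by linarith) hK.le
      nlinarith [mul_le_mul_of_nonneg_left (le_of_lt hΔmb) (le_of_lt (show (0:ℝ) < 2 * δ by linarith))]
    have hcal : (β - ε) * κ = (β - ε) + 2 * δ * ((β - ε) / K) := by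
      rw [hκdef]; field_simp
    rw [hcal]
    exact le_trans helem helem2
  by_contra hcon
  push_neg at hcon
  have hκpos : 0 < κ := by linarith
  set ε := min (β / 2) ((β * κ - EE e φ x tx) / (2 * κ)) with hεdef
  have hnum : 0 < β * κ - EE e φ x tx := by linarith
  have hε1 : 0 < ε := lt_min (by linarith) (div_pos hnum (by linarith))
  have hε2 : ε < β := lt_of_le_of_lt (min_le_left _ _) (by linarith)
  have hmain := main ε hε1 hε2
  have hεle : ε ≤ (β * κ - EE e φ x tx) / (2 * κ) := min_le_right _ _
  have hh2 : ε * κ ≤ (β * κ - EE e φ x tx) / 2 := by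
    have := mul_le_mul_of_nonneg_right hεle (le_of_lt hκpos)
    have heq : (β * κ - EE e φ x tx) / (2 * κ) * κ = (β * κ - EE e φ x tx) / 2 := by
      field_simp
    linarith [heq ▸ this]
  have hexp : (β - ε) * κ = β * κ - ε * κ := by ring
  clear_value κ ε
  linarith

end EFun

section Main

/-- lower "cosmological time" squared -/
def sigM (e : V3) (f : V3 → ℝ) (x : V3) (t : ℝ) : ℝ :=
  EE e (lowerEnv (equator e) f) x t

/-- upper "cosmological time" squared -/
def sigP (e : V3) (f : V3 → ℝ) (x : V3) (t : ℝ) : ℝ :=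
  EE e (fun y => -(upperEnv (equator e) f y)) x (-t)

/-- the balance set -/
def SS (e : V3) (f : V3 → ℝ) (x : V3) : Set ℝ := {t | sigP e f x t ≤ sigM e f x t}

/-- the spacelike extension -/
def gg (e : V3) (f : V3 → ℝ) (x : V3) : ℝ := sInf (SS e f x)

variable {e z₀ : V3} {f : V3 → ℝ}

section WithHyps

variable (he : ‖e‖ = 1) (hz₀ : z₀ ∈ equator e)
variable (hLip : ∀ x ∈ equator e, ∀ y ∈ equator e, |f x - f y| ≤ Real.arccos ⟪x, y⟫)

include he hz₀ hLip

lemma hLm : ∀ y ∈ closedHemi e, f z₀ - Real.pi ≤ lowerEnv (equator e) f y :=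
  fun y _ => lowerEnv_lb hz₀ hLip y

lemma hLp : ∀ y ∈ closedHemi e, -(f z₀ + Real.pi) ≤ -(upperEnv (equator e) f y) :=
  fun y _ => neg_le_neg (upperEnv_ub hz₀ hLip y)

lemma sigM_nonneg {x : V3} (hx : x ∈ closedHemi e) (t : ℝ) : 0 ≤ sigM e f x t :=
  EE_nonneg (hLm he hz₀ hLip) hx t

lemma sigP_nonneg {x : V3} (hx : x ∈ closedHemi e) (t : ℝ) : 0 ≤ sigP e f x t :=
  EE_nonneg (hLp he hz₀ hLip) hx (-t)

lemma sigM_pos {x : V3} (hx : x ∈ closedHemi e) {t : ℝ}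
    (h : lowerEnv (equator e) f x < t) : 0 < sigM e f x t := by
  have h1 := EE_ge (hLm he hz₀ hLip) hx t (φ := lowerEnv (equator e) f)
  have h2 : max (t - lowerEnv (equator e) f x) 0 = t - lowerEnv (equator e) f x :=
    max_eq_left (by linarith)
  rw [h2] at h1
  have : 0 < (t - lowerEnv (equator e) f x) ^ 2 := pow_pos (by linarith) 2
  exact lt_of_lt_of_le this h1

lemma sigP_pos {x : V3} (hx : x ∈ closedHemi e) {t : ℝ}
    (h : t < upperEnv (equator e) f x) : 0 < sigP e f x t := by
  have h1 := EE_ge (hLp he hz₀ hLip) hx (-t) (φ := fun y => -(upperEnv (equator e) f y))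
  have h2 : max (-t - -(upperEnv (equator e) f x)) 0 = upperEnv (equator e) f x - t := by
    rw [max_eq_left (by linarith)]; ring
  rw [h2] at h1
  have : 0 < (upperEnv (equator e) f x - t) ^ 2 := pow_pos (by linarith) 2
  exact lt_of_lt_of_le this h1

lemma sigM_nonpos {x : V3} (hx : ‖x‖ = 1) {t : ℝ}
    (h : t ≤ lowerEnv (equator e) f x) : sigM e f x t ≤ 0 := by
  refine EE_nonpos he ?_
  intro y hy
  have h1 := lowerEnv_lip hz₀ hLip hx hy.1
  rw [dd_def x y] at h1
  linarith

lemma sigP_nonpos {x : V3} (hx : ‖x‖ = 1) {t : ℝ}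
    (h : upperEnv (equator e) f x ≤ t) : sigP e f x t ≤ 0 := by
  refine EE_nonpos he ?_
  intro y hy
  have h1 := upperEnv_lip hz₀ hLip hy.1 hx
  rw [dd_def y x, dd_comm y x] at h1
  linarith

lemma SS_up {x : V3} {t t' : ℝ} (ht : t ∈ SS e f x) (htt : t ≤ t') : t' ∈ SS e f x := by
  have h1 : sigP e f x t' ≤ sigP e f x t :=
    EE_mono he (hLp he hz₀ hLip) x (neg_le_neg htt)
  have h2 : sigM e f x t ≤ sigM e f x t' :=
    EE_mono he (hLm he hz₀ hLip) x htt
  exact le_trans h1 (le_trans ht h2)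

lemma SS_nonempty {x : V3} (hx : x ∈ closedHemi e) : (SS e f x).Nonempty := by
  refine ⟨f z₀ + Real.pi, ?_⟩
  have h1 : sigP e f x (f z₀ + Real.pi) ≤ 0 :=
    sigP_nonpos he hz₀ hLip hx.1 (upperEnv_ub hz₀ hLip x)
  exact le_trans h1 (sigM_nonneg he hz₀ hLip hx _)

variable (hgen : ∀ x ∈ openHemi e, lowerEnv (equator e) f x < upperEnv (equator e) f x)
include hgen

lemma env_le' {x : V3} (hx : x ∈ closedHemi e) :
    lowerEnv (equator e) f x ≤ upperEnv (equator e) f x := env_le hz₀ hLip hgen hx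

lemma SS_not_mem {x : V3} (hx : x ∈ closedHemi e) {t : ℝ}
    (ht : t < lowerEnv (equator e) f x) : t ∉ SS e f x := by
  intro hmem
  have h1 : sigM e f x t ≤ 0 := sigM_nonpos he hz₀ hLip hx.1 (le_of_lt ht)
  have h2 : 0 < sigP e f x t :=
    sigP_pos he hz₀ hLip hx (lt_of_lt_of_le ht (env_le' he hz₀ hLip hgen hx))
  have := hmem
  rw [SS, Set.mem_setOf_eq] at this
  linarith

lemma SS_bddBelow {x : V3} (hx : x ∈ closedHemi e) : BddBelow (SS e f x) := by
  refine ⟨lowerEnv (equator e) f x, fun t ht => ?_⟩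
  by_contra h
  push_neg at h
  exact SS_not_mem he hz₀ hLip hgen hx h ht

lemma gg_ge {x : V3} (hx : x ∈ closedHemi e) :
    lowerEnv (equator e) f x ≤ gg e f x :=
  le_csInf (SS_nonempty he hz₀ hLip hx) fun t ht => by
    by_contra h
    push_neg at h
    exact SS_not_mem he hz₀ hLip hgen hx h ht

lemma gg_le {x : V3} (hx : x ∈ closedHemi e) :
    gg e f x ≤ upperEnv (equator e) f x := by
  refine csInf_le (SS_bddBelow he hz₀ hLip hgen hx) ?_
  have h1 : sigP e f x (upperEnv (equator e) f x) ≤ 0 :=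
    sigP_nonpos he hz₀ hLip hx.1 le_rfl
  exact le_trans h1 (sigM_nonneg he hz₀ hLip hx _)

lemma gg_boundary {x : V3} (hx : x ∈ equator e) : gg e f x = f x := by
  have h1 := gg_ge he hz₀ hLip hgen (equator_subset hx)
  have h2 := gg_le he hz₀ hLip hgen (equator_subset hx)
  rw [lowerEnv_eq_self hz₀ hLip hx] at h1
  rw [upperEnv_eq_self hz₀ hLip hx] at h2
  linarith

lemma gg_balance {x : V3} (hx : x ∈ closedHemi e) :
    sigP e f x (gg e f x) = sigM e f x (gg e f x) := by
  set t := gg e f x with htdef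
  have htlb : f z₀ - Real.pi ≤ t := le_trans (lowerEnv_lb hz₀ hLip x)
    (gg_ge he hz₀ hLip hgen hx)
  have htub : t ≤ f z₀ + Real.pi := le_trans (gg_le he hz₀ hLip hgen hx)
    (upperEnv_ub hz₀ hLip x)
  set M : ℝ := |f z₀| + Real.pi + Real.pi + 1 with hMdef
  have hM0 : (0:ℝ) ≤ M := by
    have := Real.pi_pos
    have := abs_nonneg (f z₀)
    rw [hMdef]; linarith
  have habs1 : f z₀ ≤ |f z₀| := le_abs_self _
  have habs2 : -|f z₀| ≤ f z₀ := neg_abs_le _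
  set C : ℝ := 2 * M + 1 with hCdef
  have hC0 : (0:ℝ) < C := by rw [hCdef]; linarith
  -- modulus bounds
  have hMm : ∀ s : ℝ, s ≤ t + 1 → ∀ y ∈ closedHemi e, s - lowerEnv (equator e) f y ≤ M := by
    intro s hs y hy
    have := lowerEnv_lb hz₀ hLip (f := f) y
    rw [hMdef]; linarith
  have hMp : ∀ s : ℝ, s ≤ -t + 1 → ∀ y ∈ closedHemi e,
      s - -(upperEnv (equator e) f y) ≤ M := by
    intro s hs y hy
    have := upperEnv_ub hz₀ hLip (f := f) y
    rw [hMdef]; linarith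
  have key1 : ∀ h : ℝ, 0 < h → h ≤ 1 →
      sigP e f x t ≤ sigM e f x t + 2 * (h * C) := by
    intro h hh1 hh2
    have hmem : t + h ∈ SS e f x := by
      obtain ⟨m, hm, hmlt⟩ := exists_lt_of_csInf_lt (SS_nonempty he hz₀ hLip hx)
        (show gg e f x < t + h by rw [← htdef]; linarith)
      exact SS_up he hz₀ hLip hm (le_of_lt hmlt)
    have hstep1 : sigP e f x t ≤ sigP e f x (t + h) + h * (2 * M + h) := by
      have := EE_modulus he (hLp he hz₀ hLip) x (t := -(t+h)) (h := h) (M := M)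
        (le_of_lt hh1) hM0 (hMp (-(t+h) + h) (by linarith))
      have heq : -(t + h) + h = -t := by ring
      rw [heq] at this
      exact this
    have hstep2 : sigM e f x (t + h) ≤ sigM e f x t + h * (2 * M + h) := by
      exact EE_modulus he (hLm he hz₀ hLip) x (le_of_lt hh1) hM0
        (hMm (t + h) (by linarith))
    have hmem2 : sigP e f x (t + h) ≤ sigM e f x (t + h) := hmem
    have hCh : h * (2 * M + h) ≤ h * C := by
      rw [hCdef]
      exact mul_le_mul_of_nonneg_left (by linarith) (le_of_lt hh1)
    linarith
  have key2 : ∀ h : ℝ, 0 < h → h ≤ 1 →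
      sigM e f x t ≤ sigP e f x t + 2 * (h * C) := by
    intro h hh1 hh2
    have hnmem : t - h ∉ SS e f x :=
      notMem_of_lt_csInf (show t - h < gg e f x by rw [← htdef]; linarith)
        (SS_bddBelow he hz₀ hLip hgen hx)
    have hlt : sigM e f x (t - h) < sigP e f x (t - h) := by
      by_contra hcon
      push_neg at hcon
      exact hnmem hcon
    have hstep1 : sigM e f x t ≤ sigM e f x (t - h) + h * (2 * M + h) := by
      have := EE_modulus he (hLm he hz₀ hLip) x (t := t - h) (h := h) (M := M)
        (le_of_lt hh1) hM0 (hMm (t - h + h) (by linarith))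
      have heq : t - h + h = t := by ring
      rw [heq] at this
      exact this
    have hstep2 : sigP e f x (t - h) ≤ sigP e f x t + h * (2 * M + h) := by
      have := EE_modulus he (hLp he hz₀ hLip) x (t := -t) (h := h) (M := M)
        (le_of_lt hh1) hM0 (hMp (-t + h) (by linarith))
      have heq : -(t - h) = -t + h := by ring
      rw [sigP, heq]
      exact this
    have hCh : h * (2 * M + h) ≤ h * C := by
      rw [hCdef]
      exact mul_le_mul_of_nonneg_left (by linarith) (le_of_lt hh1)
    linarith
  have hle1 : sigP e f x t ≤ sigM e f x t := by
    by_contra hcon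
    push_neg at hcon
    set ε : ℝ := (sigP e f x t - sigM e f x t) / 2 with hεdef
    have hε : 0 < ε := by rw [hεdef]; linarith
    set h : ℝ := min 1 (ε / (2 * C)) with hhdef
    have hh1 : 0 < h := lt_min one_pos (div_pos hε (by linarith))
    have hh2 : h ≤ 1 := min_le_left _ _
    have := key1 h hh1 hh2
    have hh3 : h ≤ ε / (2 * C) := min_le_right _ _
    have hh4 : h * C ≤ ε / 2 := by
      have h5 := mul_le_mul_of_nonneg_right hh3 (le_of_lt hC0)
      have h6 : ε / (2 * C) * C = ε / 2 := by field_simp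
      linarith [h6 ▸ h5]
    rw [hεdef] at hh4
    clear_value h ε C M t
    linarith
  have hle2 : sigM e f x t ≤ sigP e f x t := by
    by_contra hcon
    push_neg at hcon
    set ε : ℝ := (sigM e f x t - sigP e f x t) / 2 with hεdef
    have hε : 0 < ε := by rw [hεdef]; linarith
    set h : ℝ := min 1 (ε / (2 * C)) with hhdef
    have hh1 : 0 < h := lt_min one_pos (div_pos hε (by linarith))
    have hh2 : h ≤ 1 := min_le_left _ _
    have := key2 h hh1 hh2
    have hh3 : h ≤ ε / (2 * C) := min_le_right _ _
    have hh4 : h * C ≤ ε / 2 := by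
      have h5 := mul_le_mul_of_nonneg_right hh3 (le_of_lt hC0)
      have h6 : ε / (2 * C) * C = ε / 2 := by field_simp
      linarith [h6 ▸ h5]
    rw [hεdef] at hh4
    clear_value h ε C M t
    linarith
  linarith

lemma gg_pos {x : V3} (hx : x ∈ openHemi e) : 0 < sigM e f x (gg e f x) := by
  by_contra hcon
  push_neg at hcon
  have hxc := openHemi_subset hx
  have hbal := gg_balance he hz₀ hLip hgen hxc
  have h1 : ¬ (lowerEnv (equator e) f x < gg e f x) := by
    intro h
    exact absurd (sigM_pos he hz₀ hLip hxc h) (not_lt.mpr hcon)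
  have h2 : ¬ (gg e f x < upperEnv (equator e) f x) := by
    intro h
    have := sigP_pos he hz₀ hLip hxc h
    rw [hbal] at this
    exact absurd this (not_lt.mpr hcon)
  push_neg at h1 h2
  have := hgen x hx
  linarith

set_option maxHeartbeats 1000000 in
lemma no_gap {x y : V3} (hx : x ∈ closedHemi e) (hy : y ∈ closedHemi e)
    (hposy : 0 < sigM e f y (gg e f y)) (hδ : 0 < dd x y)
    (hc : dd x y ≤ gg e f x - gg e f y) : False := by
  have hπ := Real.pi_pos
  have hK : (0:ℝ) < 3 * Real.pi := by linarith
  set tx := gg e f x with htxdef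
  set ty := gg e f y with htydef
  have htxlb : f z₀ - Real.pi ≤ tx := le_trans (lowerEnv_lb hz₀ hLip x)
    (gg_ge he hz₀ hLip hgen hx)
  have htxub : tx ≤ f z₀ + Real.pi := le_trans (gg_le he hz₀ hLip hgen hx)
    (upperEnv_ub hz₀ hLip x)
  have htylb : f z₀ - Real.pi ≤ ty := le_trans (lowerEnv_lb hz₀ hLip y)
    (gg_ge he hz₀ hLip hgen hy)
  have htyub : ty ≤ f z₀ + Real.pi := le_trans (gg_le he hz₀ hLip hgen hy)
    (upperEnv_ub hz₀ hLip y)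
  have hKb1 : ∀ y' ∈ closedHemi e, ty - lowerEnv (equator e) f y' + dd y y' ≤ 3 * Real.pi := by
    intro y' hy'
    have h1 := lowerEnv_lb hz₀ hLip (f := f) y'
    have h2 := dd_le_pi y y'
    linarith
  have app1 : EE e (lowerEnv (equator e) f) y ty * (1 + 2 * dd x y / (3 * Real.pi)) ≤
      EE e (lowerEnv (equator e) f) x tx :=
    EE_key he (hLm he hz₀ hLip) hx hy hδ hc hposy hK hKb1
  have hbalx := gg_balance he hz₀ hLip hgen hx
  have hbaly := gg_balance he hz₀ hLip hgen hy
  set κ := 1 + 2 * dd x y / (3 * Real.pi) with hκdef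
  have hκ1 : 1 < κ := by
    have : 0 < 2 * dd x y / (3 * Real.pi) := div_pos (by linarith) hK
    rw [hκdef]; linarith
  have happ1 : sigM e f y ty * κ ≤ sigM e f x tx := app1
  have hposx : 0 < sigM e f x tx :=
    lt_of_lt_of_le (mul_pos hposy (by linarith)) happ1
  have hposPx : 0 < EE e (fun y => -(upperEnv (equator e) f y)) x (-tx) := by
    have : sigP e f x tx = sigM e f x tx := hbalx
    rw [sigP] at this
    rw [this]
    exact hposx
  have hKb2 : ∀ y' ∈ closedHemi e,
      -tx - -(upperEnv (equator e) f y') + dd x y' ≤ 3 * Real.pi := by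
    intro y' hy'
    have h1 := upperEnv_ub hz₀ hLip (f := f) y'
    have h2 := dd_le_pi x y'
    linarith
  have hc2 : dd y x ≤ -ty - -tx := by
    rw [dd_comm]; linarith
  have hδ2 : 0 < dd y x := by rw [dd_comm]; exact hδ
  have app2 : EE e (fun y => -(upperEnv (equator e) f y)) x (-tx) * (1 + 2 * dd y x / (3 * Real.pi)) ≤
      EE e (fun y => -(upperEnv (equator e) f y)) y (-ty) :=
    EE_key he (hLp he hz₀ hLip) hy hx hδ2 hc2 hposPx hK hKb2
  have happ2 : sigM e f x tx * κ ≤ sigM e f y ty := by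
    have h1 : EE e (fun y => -(upperEnv (equator e) f y)) y (-ty) = sigM e f y ty := hbaly
    have h2 : EE e (fun y => -(upperEnv (equator e) f y)) x (-tx) = sigM e f x tx := hbalx
    rw [h1, h2, dd_comm y x, ← hκdef] at app2
    exact app2
  have hmul : sigM e f y ty * κ * κ ≤ sigM e f x tx * κ :=
    mul_le_mul_of_nonneg_right happ1 (by linarith)
  have hκκ : 1 < κ * κ := by nlinarith
  have hfin : sigM e f y ty * 1 < sigM e f y ty * (κ * κ) :=
    mul_lt_mul_of_pos_left hκκ hposy
  clear_value κ
  nlinarith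

lemma lip_one {x y : V3} (hx : x ∈ closedHemi e) (hy : y ∈ closedHemi e) :
    gg e f x - gg e f y ≤ dd x y := by
  by_cases hxy : x = y
  · subst hxy
    have := dd_nonneg x x
    linarith
  have hδ : 0 < dd x y := dd_pos hx.1 hy.1 hxy
  by_contra hcon
  push_neg at hcon
  rcases lt_or_ge 0 (sigM e f y (gg e f y)) with hpos | hnp
  · exact no_gap he hz₀ hLip hgen hx hy hpos hδ (le_of_lt hcon)
  · have hbal := gg_balance he hz₀ hLip hgen hy
    have h2 : upperEnv (equator e) f y ≤ gg e f y := by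
      by_contra h
      push_neg at h
      have := sigP_pos he hz₀ hLip hy h
      rw [hbal] at this
      linarith
    have h3 : gg e f x ≤ upperEnv (equator e) f x := gg_le he hz₀ hLip hgen hx
    have h4 := upperEnv_lip hz₀ hLip hx.1 hy.1
    rw [dd_def x y] at h4
    linarith

lemma gg_strict {x y : V3} (hx : x ∈ openHemi e) (hy : y ∈ openHemi e) (hne : x ≠ y) :
    |gg e f x - gg e f y| < dd x y := by
  have hδ : 0 < dd x y := dd_pos hx.1 hy.1 hne
  have H : ∀ a b : V3, a ∈ openHemi e → b ∈ openHemi e → a ≠ b →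
      ¬ (dd a b ≤ gg e f a - gg e f b) := by
    intro a b ha hb hab hc
    exact no_gap he hz₀ hLip hgen (openHemi_subset ha) (openHemi_subset hb)
      (gg_pos he hz₀ hLip hgen hb) (dd_pos ha.1 hb.1 hab) hc
  rw [abs_lt]
  constructor
  · by_contra h
    push_neg at h
    have : dd y x ≤ gg e f y - gg e f x := by rw [dd_comm]; linarith
    exact H y x hy hx (Ne.symm hne) this
  · by_contra h
    push_neg at h
    exact H x y hx hy hne h

end WithHyps

end Main

end

end SpacelikeAux

/-- Every generic achronal topological circle of `Ein₂` — the graph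
of a `1`-Lipschitz map `f : ∂D → ℝ` with `f₋ < f₊` on `D` — bounds a spacelike
surface in `AdS`: there is an extension `g` of `f` to the closed hemisphere which
is `1`-Lipschitz on `D̄` and contracting on `D`. -/
theorem generic_circle_bounds_spacelike_surface (e : EuclideanSpace ℝ (Fin 3))
    (he : ‖e‖ = 1) (f : EuclideanSpace ℝ (Fin 3) → ℝ)
    (hLip : ∀ x ∈ equator e, ∀ y ∈ equator e, |f x - f y| ≤ Real.arccos ⟪x, y⟫)
    (hgen : ∀ x ∈ openHemi e, lowerEnv (equator e) f x < upperEnv (equator e) f x) :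
    ∃ g : EuclideanSpace ℝ (Fin 3) → ℝ,
      (∀ x ∈ equator e, g x = f x) ∧
      (∀ x ∈ closedHemi e, ∀ y ∈ closedHemi e, |g x - g y| ≤ Real.arccos ⟪x, y⟫) ∧
      (∀ x ∈ openHemi e, ∀ y ∈ openHemi e, x ≠ y →
        |g x - g y| < Real.arccos ⟪x, y⟫) := by

  obtain ⟨z₀, hz₀⟩ := SpacelikeAux.equator_nonempty he
  refine ⟨SpacelikeAux.gg e f, ?_, ?_, ?_⟩
  · intro x hx
    exact SpacelikeAux.gg_boundary he hz₀ hLip hgen hx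
  · intro x hx y hy
    rw [SpacelikeAux.dd_def x y, abs_sub_le_iff]
    refine ⟨SpacelikeAux.lip_one he hz₀ hLip hgen hx hy, ?_⟩
    rw [SpacelikeAux.dd_comm x y]
    exact SpacelikeAux.lip_one he hz₀ hLip hgen hy hx
  · intro x hx y hy hne
    rw [SpacelikeAux.dd_def x y]
    exact SpacelikeAux.gg_strict he hz₀ hLip hgen hx hy hne
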